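/- Let G be a countable group. If the left multiplication action of G on itself is sofic, then G is a sofic group. -/

import Mathlib

open scoped Classical Pointwise

noncomputable def hDist {A : Type*} [Fintype A] (σ τ : Equiv.Perm A) : ℝ :=
  ((Finset.univ.filter fun a => σ a ≠ τ a).card : ℝ) / (Fintype.card A : ℝ)

/-- `φ : G → Sym(Fin n)` is an `(F, E, ε)`-orbit approximation of the action `α : G ↷ X`. -/
def IsOrbitApprox {G X : Type*} [Group G] {n : ℕ} (α : G →* Equiv.Perm X)
    (F : Finset G) (E : Finset X) (ε : ℝ) (φ : G → Equiv.Perm (Fin n)) : Prop :=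
  ∃ (m : ℕ) (S : Finset (Fin n)) (π : Fin n → X → Fin m),
    ((S.card : ℝ) > (1 - ε) * (n : ℝ)) ∧
    (∀ s ∈ S, Set.InjOn (π s) (E : Set X)) ∧
    (∀ s ∈ S, ∀ g ∈ F, ∀ x ∈ E, φ g s ∈ S → α g⁻¹ x ∈ E →
      π (φ g s) x = π s (α g⁻¹ x))

/-- Soficity of an action `α : G ↷ X` given as a homomorphism `G →* Sym(X)`. -/
def SoficAction {G X : Type*} [Group G] (α : G →* Equiv.Perm X) : Prop :=
  ∀ (F : Finset G) (E : Finset X) (ε : ℝ), 0 < ε →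
    ∃ (n : ℕ) (φ : G → Equiv.Perm (Fin n)),
      φ 1 = 1 ∧
      (∀ g ∈ F, ∀ h ∈ F, hDist (φ (g * h)) (φ g * φ h) < ε) ∧
      IsOrbitApprox α F E ε φ

/-- Soficity of a group. -/
def SoficGroup (G : Type*) [Group G] : Prop :=
  ∀ (F : Finset G) (ε : ℝ), 0 < ε →
    ∃ (n : ℕ) (φ : G → Equiv.Perm (Fin n)),
      φ 1 = 1 ∧
      (∀ g ∈ F, ∀ h ∈ F, hDist (φ (g * h)) (φ g * φ h) < ε) ∧
      (∀ g ∈ F, g ≠ 1 → hDist 1 (φ g) > 1 - ε)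

theorem stmt_13 {G : Type*} [Group G] [Countable G]
    (h : SoficAction (MulAction.toPermHom G G)) :
    SoficGroup G := by
  intro F ε hε
  obtain ⟨n, φ, h1, hmult, m, S, π, hS, hinj, hcomm⟩ :=
    h F (insert (1:G) (F.image (·⁻¹))) ε hε
  refine ⟨n, φ, h1, hmult, ?_⟩
  intro g hg hg1
  have hnpos : 0 < n := by
    rcases Nat.eq_zero_or_pos n with h0 | h0
    · subst h0
      have hSe : S = ∅ := Finset.eq_empty_of_isEmpty S
      rw [hSe] at hS; simp at hS
    · exact h0
  set E : Finset G := insert (1:G) (F.image (·⁻¹)) with hE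
  have hE1 : (1:G) ∈ E := Finset.mem_insert_self _ _
  have hEg : g⁻¹ ∈ E := Finset.mem_insert_of_mem (Finset.mem_image_of_mem _ hg)
  have hsub : S ⊆ Finset.univ.filter fun a => (1 : Equiv.Perm (Fin n)) a ≠ φ g a := by
    intro s hs
    simp only [Finset.mem_filter, Finset.mem_univ, true_and, Equiv.Perm.one_apply]
    refine Finset.mem_filter.mpr ⟨Finset.mem_univ _, ?_⟩
    intro heq
    have hfix : φ g s = s := heq.symm
    have hαE : (MulAction.toPermHom G G) g⁻¹ (1:G) ∈ E := by
      simpa [MulAction.toPermHom_apply, smul_eq_mul] using hEg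
    have hc := hcomm s hs g hg 1 hE1 (by rw [hfix]; exact hs) hαE
    rw [hfix] at hc
    have h1g : (1:G) = (MulAction.toPermHom G G) g⁻¹ (1:G) :=
      hinj s hs hE1 hαE hc
    have : (1:G) = g⁻¹ := by
      simpa [MulAction.toPermHom_apply, smul_eq_mul] using h1g
    exact hg1 (by rw [← inv_inv g, ← this, inv_one])
  have hcard : (S.card : ℝ) ≤
      ((Finset.univ.filter fun a => (1 : Equiv.Perm (Fin n)) a ≠ φ g a).card : ℝ) :=
    Nat.cast_le.mpr (Finset.card_le_card hsub)
  have hn : (0:ℝ) < n := Nat.cast_pos.mpr hnpos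
  have h1 : (1 - ε) < (S.card : ℝ) / n := (lt_div_iff₀ hn).mpr hS
  have h2 : (S.card : ℝ) / n ≤
      ((Finset.univ.filter fun a => (1 : Equiv.Perm (Fin n)) a ≠ φ g a).card : ℝ) / n := by
    gcongr
  show hDist 1 (φ g) > 1 - ε
  unfold hDist
  rw [Fintype.card_fin]
  refine lt_of_lt_of_le h1 ?_
  convert h2 using 4
  rfl
  exact Finset.filter_congr_decidable _ _ _
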